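/- Let f₀ : ℝ^n → ℝ be differentiable, f₁ convex proper lsc bounded below, f = f₀ + f₁ bounded below by ℓ. Let {x⁽ᵏ⁾}, {ỹ⁽ᵏ⁾} ⊂ dom(f₁), Δ⁽ᵏ⁾ < 0, and λ⁽ᵏ⁾ ∈ (0,1] satisfy the Armijo condition f(x⁽ᵏ⁾ + λ⁽ᵏ⁾(ỹ⁽ᵏ⁾ − x⁽ᵏ⁾)) ≤ f(x⁽ᵏ⁾) + βλ⁽ᵏ⁾Δ⁽ᵏ⁾ with β ∈ (0,1), and suppose f(x⁽ᵏ⁺¹⁾) ≤ f(x⁽ᵏ⁾ + λ⁽ᵏ⁾(ỹ⁽ᵏ⁾ − x⁽ᵏ⁾)). Then 0 ≤ −Σ_{k=0}^∞ λ⁽ᵏ⁾Δ⁽ᵏ⁾ ≤ (f(x⁽⁰⁾) − ℓ)/β < ∞. -/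

import Mathlib

theorem stmt_12 (n : ℕ) (f₀ : (Fin n → ℝ) → ℝ) (hf₀ : Differentiable ℝ f₀)
    (f₁ : (Fin n → ℝ) → EReal)
    (hconv : ∀ u v : Fin n → ℝ, ∀ a b : ℝ, 0 ≤ a → 0 ≤ b → a + b = 1 →
      f₁ (a • u + b • v) ≤ (a : EReal) * f₁ u + (b : EReal) * f₁ v)
    (hproper : ∃ u, f₁ u ≠ ⊤) (hbot : ∀ u, f₁ u ≠ ⊥) (hlsc : LowerSemicontinuous f₁)
    (hf₁bdd : ∃ c : ℝ, ∀ u, (c : EReal) ≤ f₁ u)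
    (ℓ : ℝ) (hbdd : ∀ u : Fin n → ℝ, (ℓ : EReal) ≤ ((f₀ u : ℝ) : EReal) + f₁ u)
    (x ty : ℕ → (Fin n → ℝ)) (hdom : ∀ k, f₁ (x k) ≠ ⊤ ∧ f₁ (ty k) ≠ ⊤)
    (Δ : ℕ → ℝ) (hΔ : ∀ k, Δ k < 0)
    (lam : ℕ → ℝ) (hlam : ∀ k, lam k ∈ Set.Ioc (0 : ℝ) 1)
    (β : ℝ) (hβ : β ∈ Set.Ioo (0 : ℝ) 1)
    (harmijo : ∀ k,
      ((f₀ (x k + lam k • (ty k - x k)) : ℝ) : EReal) + f₁ (x k + lam k • (ty k - x k)) ≤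
        ((f₀ (x k) : ℝ) : EReal) + f₁ (x k) + ((β * lam k * Δ k : ℝ) : EReal))
    (hdecr : ∀ k,
      ((f₀ (x (k + 1)) : ℝ) : EReal) + f₁ (x (k + 1)) ≤
        ((f₀ (x k + lam k • (ty k - x k)) : ℝ) : EReal) + f₁ (x k + lam k • (ty k - x k))) :
    (∀ k, 0 ≤ -(lam k * Δ k)) ∧
    Summable (fun k => -(lam k * Δ k)) ∧
    (β : EReal) * ((∑' k, -(lam k * Δ k) : ℝ) : EReal) ≤
      (((f₀ (x 0) : ℝ) : EReal) + f₁ (x 0)) - (ℓ : EReal) := by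
  -- real-valued objective along the iterates
  set F : ℕ → ℝ := fun k => f₀ (x k) + (f₁ (x k)).toReal with hF
  have hcoe : ∀ k, f₁ (x k) = (((f₁ (x k)).toReal : ℝ) : EReal) := fun k =>
    (EReal.coe_toReal (hdom k).1 (hbot (x k))).symm
  -- F(k+1) ≤ F k + β λ Δ
  have hstep : ∀ k, F (k + 1) ≤ F k + β * lam k * Δ k := by
    intro k
    have h := (hdecr k).trans (harmijo k)
    rw [hcoe k, hcoe (k + 1)] at h
    have h2 : (((f₀ (x (k + 1)) + (f₁ (x (k + 1))).toReal : ℝ)) : EReal) ≤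
        ((f₀ (x k) + (f₁ (x k)).toReal + β * lam k * Δ k : ℝ) : EReal) := by
      push_cast
      push_cast at h
      convert h using 1 <;> ring
    exact_mod_cast h2
  have hlow : ∀ k, ℓ ≤ F k := by
    intro k
    have h := hbdd (x k)
    rw [hcoe k] at h
    have h2 : ((ℓ : ℝ) : EReal) ≤ ((f₀ (x k) + (f₁ (x k)).toReal : ℝ) : EReal) := by
      push_cast; exact h
    exact_mod_cast h2
  have hpos : ∀ k, 0 ≤ -(lam k * Δ k) := by
    intro k
    have := mul_nonpos_of_nonneg_of_nonpos (le_of_lt (hlam k).1) (le_of_lt (hΔ k))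
    linarith
  have hβpos := hβ.1
  -- partial sums bound
  have hpart : ∀ N : ℕ, ∑ k ∈ Finset.range N, β * (-(lam k * Δ k)) ≤ F 0 - ℓ := by
    intro N
    have key : ∀ N : ℕ, F N + ∑ k ∈ Finset.range N, β * (-(lam k * Δ k)) ≤ F 0 := by
      intro N
      induction N with
      | zero => simp
      | succ m ih =>
        rw [Finset.sum_range_succ]
        have := hstep m
        nlinarith [ih]
    have := key N
    have := hlow N
    linarith
  have hpart' : ∀ N : ℕ, ∑ k ∈ Finset.range N, (-(lam k * Δ k)) ≤ (F 0 - ℓ) / β := by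
    intro N
    rw [le_div_iff₀ hβpos]
    calc (∑ k ∈ Finset.range N, (-(lam k * Δ k))) * β
        = ∑ k ∈ Finset.range N, β * (-(lam k * Δ k)) := by
          rw [Finset.sum_mul]; exact Finset.sum_congr rfl fun k _ => by ring
      _ ≤ F 0 - ℓ := hpart N
  have hsum : Summable (fun k => -(lam k * Δ k)) :=
    summable_of_sum_range_le hpos hpart'
  refine ⟨hpos, hsum, ?_⟩
  have htsum : (∑' k, -(lam k * Δ k)) ≤ (F 0 - ℓ) / β :=
    Summable.tsum_le_of_sum_range_le hsum hpart'
  have hfin : β * (∑' k, -(lam k * Δ k)) ≤ F 0 - ℓ := by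
    rw [mul_comm]
    exact (le_div_iff₀ hβpos).mp htsum
  rw [hcoe 0]
  have : ((β * ∑' k, -(lam k * Δ k) : ℝ) : EReal) ≤ ((F 0 - ℓ : ℝ) : EReal) :=
    EReal.coe_le_coe_iff.mpr hfin
  calc (β : EReal) * ((∑' k, -(lam k * Δ k) : ℝ) : EReal)
      = ((β * ∑' k, -(lam k * Δ k) : ℝ) : EReal) := by rw [← EReal.coe_mul]
    _ ≤ ((F 0 - ℓ : ℝ) : EReal) := this
    _ = (((f₀ (x 0) : ℝ) : EReal) + (((f₁ (x 0)).toReal : ℝ) : EReal)) - (ℓ : EReal) := by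
        push_cast [hF]; rfl
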